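/- arXiv:2111.03455 — 5 statements merged into one kernel-verified Lean document; each statement's English description precedes it below -/
import Mathlib

section
/- Let $k_\xi > 0$, $\Delta_0 > 0$, and let $\omega_x, \omega_y, \omega_z, u, g : \mathbb{R} \to \mathbb{R}$ be continuous functions with $u(t) > 0$ and $\cos(g(t)) > 0$ for all $t$. Suppose $x, y, z : \mathbb{R} \to \mathbb{R}$ are differentiable and satisfy, with $\Delta(t) = \sqrt{\Delta_0^2 + x(t)^2 + y(t)^2 + z(t)^2}$: $\dot{x} = -k_\xi \, x/\sqrt{1+x^2} + \omega_z y - \omega_y z$, $\dot{y} = -u\cos(g)\, y/\sqrt{\Delta^2+y^2} + \omega_x z - \omega_z x$, and $\dot{z} = -u\, z/\sqrt{\Delta^2+z^2} + \omega_y x - \omega_x y$. Then the function $V(t) = \tfrac{1}{2}(x(t)^2+y(t)^2+z(t)^2)$ has derivative $\dot{V}(t) = -\frac{k_\xi}{\sqrt{1+x^2}}x^2 - \frac{u\cos(g)}{\sqrt{\Delta^2+y^2}}y^2 - \frac{u}{\sqrt{\Delta^2+z^2}}z^2 \le 0$; in particular $V$ is nonincreasing. -/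
open Real

/-- Lyapunov computation for the nominal path-following error dynamics:
`V = ½(x²+y²+z²)` has the stated nonpositive derivative, so `V` is nonincreasing. -/
theorem nominal_lyapunov_derivative
    (kξ Δ0 : ℝ) (hkξ : 0 < kξ) (hΔ0 : 0 < Δ0)
    (ωx ωy ωz u g : ℝ → ℝ)
    (hωx : Continuous ωx) (hωy : Continuous ωy) (hωz : Continuous ωz)
    (hu : Continuous u) (hg : Continuous g)
    (hupos : ∀ t, 0 < u t) (hgpos : ∀ t, 0 < Real.cos (g t))
    (x y z : ℝ → ℝ)
    (Δ : ℝ → ℝ)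
    (hΔ : ∀ t, Δ t = Real.sqrt (Δ0 ^ 2 + (x t) ^ 2 + (y t) ^ 2 + (z t) ^ 2))
    (hx : ∀ t, HasDerivAt x
      (-kξ * x t / Real.sqrt (1 + (x t) ^ 2) + ωz t * y t - ωy t * z t) t)
    (hy : ∀ t, HasDerivAt y
      (-(u t * Real.cos (g t)) * y t / Real.sqrt ((Δ t) ^ 2 + (y t) ^ 2)
        + ωx t * z t - ωz t * x t) t)
    (hz : ∀ t, HasDerivAt z
      (-(u t) * z t / Real.sqrt ((Δ t) ^ 2 + (z t) ^ 2)
        + ωy t * x t - ωx t * y t) t) :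
    (∀ t, HasDerivAt (fun s => (1 / 2) * ((x s) ^ 2 + (y s) ^ 2 + (z s) ^ 2))
        (-(kξ / Real.sqrt (1 + (x t) ^ 2)) * (x t) ^ 2
          - (u t * Real.cos (g t) / Real.sqrt ((Δ t) ^ 2 + (y t) ^ 2)) * (y t) ^ 2
          - (u t / Real.sqrt ((Δ t) ^ 2 + (z t) ^ 2)) * (z t) ^ 2) t
      ∧ (-(kξ / Real.sqrt (1 + (x t) ^ 2)) * (x t) ^ 2
          - (u t * Real.cos (g t) / Real.sqrt ((Δ t) ^ 2 + (y t) ^ 2)) * (y t) ^ 2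
          - (u t / Real.sqrt ((Δ t) ^ 2 + (z t) ^ 2)) * (z t) ^ 2) ≤ 0)
    ∧ Antitone (fun s => (1 / 2) * ((x s) ^ 2 + (y s) ^ 2 + (z s) ^ 2)) := by
  have key : ∀ t, HasDerivAt (fun s => (1 / 2) * ((x s) ^ 2 + (y s) ^ 2 + (z s) ^ 2))
      (-(kξ / Real.sqrt (1 + (x t) ^ 2)) * (x t) ^ 2
        - (u t * Real.cos (g t) / Real.sqrt ((Δ t) ^ 2 + (y t) ^ 2)) * (y t) ^ 2
        - (u t / Real.sqrt ((Δ t) ^ 2 + (z t) ^ 2)) * (z t) ^ 2) t := by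
    intro t
    have h := ((((hx t).pow 2).add ((hy t).pow 2)).add ((hz t).pow 2)).const_mul ((1:ℝ)/2)
    convert h using 1
    · rfl
    · rfl
    · rfl
    ring
  have nonpos : ∀ t, (-(kξ / Real.sqrt (1 + (x t) ^ 2)) * (x t) ^ 2
        - (u t * Real.cos (g t) / Real.sqrt ((Δ t) ^ 2 + (y t) ^ 2)) * (y t) ^ 2
        - (u t / Real.sqrt ((Δ t) ^ 2 + (z t) ^ 2)) * (z t) ^ 2) ≤ 0 := by
    intro t
    have h1 : (0:ℝ) ≤ (kξ / Real.sqrt (1 + (x t) ^ 2)) * (x t) ^ 2 :=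
      mul_nonneg (div_nonneg hkξ.le (Real.sqrt_nonneg _)) (sq_nonneg _)
    have h2 : (0:ℝ) ≤ (u t * Real.cos (g t) / Real.sqrt ((Δ t) ^ 2 + (y t) ^ 2)) * (y t) ^ 2 :=
      mul_nonneg (div_nonneg (mul_nonneg (hupos t).le (hgpos t).le) (Real.sqrt_nonneg _)) (sq_nonneg _)
    have h3 : (0:ℝ) ≤ (u t / Real.sqrt ((Δ t) ^ 2 + (z t) ^ 2)) * (z t) ^ 2 :=
      mul_nonneg (div_nonneg (hupos t).le (Real.sqrt_nonneg _)) (sq_nonneg _)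
    linarith
  refine ⟨fun t => ⟨key t, nonpos t⟩, ?_⟩
  apply antitone_of_deriv_nonpos
  · exact fun t => (key t).differentiableAt
  · intro t
    rw [(key t).deriv]
    exact nonpos t
end

section
/- Let $k_\xi > 0$, $\Delta_0 > 0$, $r > 0$, $u_{\min} > 0$, $c \in (0,1]$, and let $\omega_x, \omega_y, \omega_z, u, g : \mathbb{R} \to \mathbb{R}$ be continuous with $u(t) \ge u_{\min}$ and $\cos(g(t)) \ge c$ for all $t \ge t_0$. Suppose $x, y, z : \mathbb{R} \to \mathbb{R}$ are differentiable and satisfy, with $\Delta(t) = \sqrt{\Delta_0^2 + x^2 + y^2 + z^2}$: $\dot{x} = -k_\xi x/\sqrt{1+x^2} + \omega_z y - \omega_y z$, $\dot{y} = -u\cos(g) y/\sqrt{\Delta^2+y^2} + \omega_x z - \omega_z x$, $\dot{z} = -u z/\sqrt{\Delta^2+z^2} + \omega_y x - \omega_x y$ for all $t \ge t_0$, and that $x(t_0)^2 + y(t_0)^2 + z(t_0)^2 \le r^2$. Then, with $q_{\min} = \min\{k_\xi/\sqrt{1+r^2},\ u_{\min}\,c/\sqrt{\Delta_0^2 + 4r^2}\}$,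 for all $t \ge t_0$: $\sqrt{x(t)^2+y(t)^2+z(t)^2} \le \sqrt{x(t_0)^2+y(t_0)^2+z(t_0)^2}\; e^{-q_{\min}(t-t_0)}$. -/
open Real

set_option maxHeartbeats 1000000 in
/-- USGES estimate for the nominal path-following error dynamics: solutions starting in the
ball of radius `r` decay exponentially with rate `qmin`. -/
theorem nominal_USGES
    (kξ Δ0 r umin c t0 : ℝ)
    (hkξ : 0 < kξ) (hΔ0 : 0 < Δ0) (hr : 0 < r) (humin : 0 < umin)
    (hc0 : 0 < c) (hc1 : c ≤ 1)
    (ωx ωy ωz u g : ℝ → ℝ)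
    (hωx : Continuous ωx) (hωy : Continuous ωy) (hωz : Continuous ωz)
    (hu : Continuous u) (hg : Continuous g)
    (hub : ∀ t, t0 ≤ t → umin ≤ u t)
    (hgb : ∀ t, t0 ≤ t → c ≤ Real.cos (g t))
    (x y z : ℝ → ℝ)
    (Δ : ℝ → ℝ)
    (hΔ : ∀ t, Δ t = Real.sqrt (Δ0 ^ 2 + (x t) ^ 2 + (y t) ^ 2 + (z t) ^ 2))
    (hx : ∀ t, t0 ≤ t → HasDerivAt x
      (-kξ * x t / Real.sqrt (1 + (x t) ^ 2) + ωz t * y t - ωy t * z t) t)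
    (hy : ∀ t, t0 ≤ t → HasDerivAt y
      (-(u t * Real.cos (g t)) * y t / Real.sqrt ((Δ t) ^ 2 + (y t) ^ 2)
        + ωx t * z t - ωz t * x t) t)
    (hz : ∀ t, t0 ≤ t → HasDerivAt z
      (-(u t) * z t / Real.sqrt ((Δ t) ^ 2 + (z t) ^ 2)
        + ωy t * x t - ωx t * y t) t)
    (hinit : (x t0) ^ 2 + (y t0) ^ 2 + (z t0) ^ 2 ≤ r ^ 2) :
    ∀ t, t0 ≤ t →
      Real.sqrt ((x t) ^ 2 + (y t) ^ 2 + (z t) ^ 2) ≤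
        Real.sqrt ((x t0) ^ 2 + (y t0) ^ 2 + (z t0) ^ 2) *
          Real.exp (-(min (kξ / Real.sqrt (1 + r ^ 2))
            (umin * c / Real.sqrt (Δ0 ^ 2 + 4 * r ^ 2))) * (t - t0)) := by
  set q : ℝ := min (kξ / Real.sqrt (1 + r ^ 2))
      (umin * c / Real.sqrt (Δ0 ^ 2 + 4 * r ^ 2)) with hqdef
  set V : ℝ → ℝ := fun t => x t ^ 2 + y t ^ 2 + z t ^ 2 with hVdef
  set D : ℝ → ℝ := fun t =>
      -(2 * kξ * x t ^ 2 / Real.sqrt (1 + x t ^ 2)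
        + 2 * (u t * Real.cos (g t)) * y t ^ 2 / Real.sqrt (Δ t ^ 2 + y t ^ 2)
        + 2 * u t * z t ^ 2 / Real.sqrt (Δ t ^ 2 + z t ^ 2)) with hDdef
  -- positivity of square roots
  have hs1 : ∀ t, (0:ℝ) < Real.sqrt (1 + x t ^ 2) := fun t =>
    Real.sqrt_pos.2 (by positivity)
  have hΔsq : ∀ t, Δ t ^ 2 = Δ0 ^ 2 + x t ^ 2 + y t ^ 2 + z t ^ 2 := fun t => by
    rw [hΔ t, Real.sq_sqrt (by positivity)]
  have hs2 : ∀ t, (0:ℝ) < Real.sqrt (Δ t ^ 2 + y t ^ 2) := fun t =>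
    Real.sqrt_pos.2 (by rw [hΔsq]; positivity)
  have hs3 : ∀ t, (0:ℝ) < Real.sqrt (Δ t ^ 2 + z t ^ 2) := fun t =>
    Real.sqrt_pos.2 (by rw [hΔsq]; positivity)
  have hucg : ∀ t, t0 ≤ t → umin * c ≤ u t * Real.cos (g t) := fun t ht =>
    mul_le_mul (hub t ht) (hgb t ht) hc0.le (humin.le.trans (hub t ht))
  have hupos : ∀ t, t0 ≤ t → 0 < u t := fun t ht => humin.trans_le (hub t ht)
  -- derivative of V
  have hVd : ∀ t, t0 ≤ t → HasDerivAt V (D t) t := by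
    intro t ht
    have h := (((hx t ht).pow 2).add ((hy t ht).pow 2)).add ((hz t ht).pow 2)
    refine h.congr_deriv ?_
    simp only [Nat.cast_ofNat]
    ring
  have hDnonpos : ∀ t, t0 ≤ t → D t ≤ 0 := by
    intro t ht
    have h1 : 0 ≤ 2 * kξ * x t ^ 2 / Real.sqrt (1 + x t ^ 2) := by positivity
    have h2 : 0 ≤ 2 * (u t * Real.cos (g t)) * y t ^ 2 / Real.sqrt (Δ t ^ 2 + y t ^ 2) := by
      apply div_nonneg _ (hs2 t).le
      have := hucg t ht
      nlinarith [sq_nonneg (y t), mul_pos humin hc0]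
    have h3 : 0 ≤ 2 * u t * z t ^ 2 / Real.sqrt (Δ t ^ 2 + z t ^ 2) := by
      apply div_nonneg _ (hs3 t).le
      nlinarith [sq_nonneg (z t), hupos t ht]
    simp only [hDdef, neg_nonpos]
    linarith
  -- V is antitone, hence V t ≤ r ^ 2
  have hanti : AntitoneOn V (Set.Ici t0) := by
    apply antitoneOn_of_deriv_nonpos (convex_Ici t0)
    · exact fun t ht => ((hVd t ht).continuousAt).continuousWithinAt
    · intro t ht
      rw [interior_Ici] at ht
      exact ((hVd t ht.le).differentiableAt).differentiableWithinAt
    · intro t ht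
      rw [interior_Ici] at ht
      rw [(hVd t ht.le).deriv]
      exact hDnonpos t ht.le
  have hVr : ∀ t, t0 ≤ t → V t ≤ r ^ 2 := fun t ht =>
    le_trans (hanti Set.self_mem_Ici ht ht) hinit
  have hq0 : 0 < q := lt_min (by positivity) (by positivity)
  -- the key differential inequality D t ≤ -(2*q) * V t
  have hkey : ∀ t, t0 ≤ t → D t ≤ -(2 * q) * V t := by
    intro t ht
    have hVt : x t ^ 2 + y t ^ 2 + z t ^ 2 ≤ r ^ 2 := hVr t ht
    have hx2 : x t ^ 2 ≤ r ^ 2 := by nlinarith [sq_nonneg (y t), sq_nonneg (z t)]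
    have hb1 : Real.sqrt (1 + x t ^ 2) ≤ Real.sqrt (1 + r ^ 2) :=
      Real.sqrt_le_sqrt (by linarith)
    have hb2 : Real.sqrt (Δ t ^ 2 + y t ^ 2) ≤ Real.sqrt (Δ0 ^ 2 + 4 * r ^ 2) := by
      apply Real.sqrt_le_sqrt
      rw [hΔsq]
      nlinarith [sq_nonneg (x t), sq_nonneg (z t), sq_nonneg (y t), sq_nonneg r, hVt]
    have hb3 : Real.sqrt (Δ t ^ 2 + z t ^ 2) ≤ Real.sqrt (Δ0 ^ 2 + 4 * r ^ 2) := by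
      apply Real.sqrt_le_sqrt
      rw [hΔsq]
      nlinarith [sq_nonneg (x t), sq_nonneg (z t), sq_nonneg (y t), sq_nonneg r, hVt]
    -- termwise bounds
    have t1 : q * x t ^ 2 ≤ kξ * x t ^ 2 / Real.sqrt (1 + x t ^ 2) := by
      have h : q ≤ kξ / Real.sqrt (1 + x t ^ 2) :=
        le_trans (min_le_left _ _) (div_le_div₀ hkξ.le le_rfl (hs1 t) hb1)
      calc q * x t ^ 2 ≤ (kξ / Real.sqrt (1 + x t ^ 2)) * x t ^ 2 := by
            exact mul_le_mul_of_nonneg_right h (sq_nonneg _)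
        _ = kξ * x t ^ 2 / Real.sqrt (1 + x t ^ 2) := by ring
    have t2 : q * y t ^ 2 ≤ u t * Real.cos (g t) * y t ^ 2 / Real.sqrt (Δ t ^ 2 + y t ^ 2) := by
      have h : q ≤ u t * Real.cos (g t) / Real.sqrt (Δ t ^ 2 + y t ^ 2) :=
        le_trans (min_le_right _ _) (div_le_div₀ (le_trans (mul_pos humin hc0).le (hucg t ht))
          (hucg t ht) (hs2 t) hb2)
      calc q * y t ^ 2 ≤ (u t * Real.cos (g t) / Real.sqrt (Δ t ^ 2 + y t ^ 2)) * y t ^ 2 :=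
            mul_le_mul_of_nonneg_right h (sq_nonneg _)
        _ = u t * Real.cos (g t) * y t ^ 2 / Real.sqrt (Δ t ^ 2 + y t ^ 2) := by ring
    have t3 : q * z t ^ 2 ≤ u t * z t ^ 2 / Real.sqrt (Δ t ^ 2 + z t ^ 2) := by
      have huc : umin * c ≤ u t := le_trans (by nlinarith) (hub t ht)
      have h : q ≤ u t / Real.sqrt (Δ t ^ 2 + z t ^ 2) :=
        le_trans (min_le_right _ _) (div_le_div₀ (hupos t ht).le huc (hs3 t) hb3)
      calc q * z t ^ 2 ≤ (u t / Real.sqrt (Δ t ^ 2 + z t ^ 2)) * z t ^ 2 :=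
            mul_le_mul_of_nonneg_right h (sq_nonneg _)
        _ = u t * z t ^ 2 / Real.sqrt (Δ t ^ 2 + z t ^ 2) := by ring
    have e1 : 2 * kξ * x t ^ 2 / Real.sqrt (1 + x t ^ 2)
        = 2 * (kξ * x t ^ 2 / Real.sqrt (1 + x t ^ 2)) := by ring
    have e2 : 2 * (u t * Real.cos (g t)) * y t ^ 2 / Real.sqrt (Δ t ^ 2 + y t ^ 2)
        = 2 * (u t * Real.cos (g t) * y t ^ 2 / Real.sqrt (Δ t ^ 2 + y t ^ 2)) := by ring
    have e3 : 2 * u t * z t ^ 2 / Real.sqrt (Δ t ^ 2 + z t ^ 2)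
        = 2 * (u t * z t ^ 2 / Real.sqrt (Δ t ^ 2 + z t ^ 2)) := by ring
    show -(2 * kξ * x t ^ 2 / Real.sqrt (1 + x t ^ 2)
        + 2 * (u t * Real.cos (g t)) * y t ^ 2 / Real.sqrt (Δ t ^ 2 + y t ^ 2)
        + 2 * u t * z t ^ 2 / Real.sqrt (Δ t ^ 2 + z t ^ 2))
      ≤ -(2 * q) * (x t ^ 2 + y t ^ 2 + z t ^ 2)
    rw [e1, e2, e3]
    linarith [t1, t2, t3]
  -- Grönwall via the auxiliary function W
  set W : ℝ → ℝ := fun t => V t * Real.exp (2 * q * (t - t0)) with hWdef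
  have hWd : ∀ t, t0 ≤ t → HasDerivAt W
      ((D t + 2 * q * V t) * Real.exp (2 * q * (t - t0))) t := by
    intro t ht
    have he : HasDerivAt (fun s => Real.exp (2 * q * (s - t0)))
        (Real.exp (2 * q * (t - t0)) * (2 * q * 1)) t :=
      (((hasDerivAt_id t).sub_const t0).const_mul (2 * q)).exp
    have h := (hVd t ht).mul he
    refine h.congr_deriv ?_
    ring
  have hWanti : AntitoneOn W (Set.Ici t0) := by
    apply antitoneOn_of_deriv_nonpos (convex_Ici t0)
    · exact fun t ht => ((hWd t ht).continuousAt).continuousWithinAt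
    · intro t ht
      rw [interior_Ici] at ht
      exact ((hWd t ht.le).differentiableAt).differentiableWithinAt
    · intro t ht
      rw [interior_Ici] at ht
      rw [(hWd t ht.le).deriv]
      apply mul_nonpos_of_nonpos_of_nonneg _ (Real.exp_pos _).le
      have := hkey t ht.le
      linarith
  intro t ht
  have hW : W t ≤ W t0 := hWanti Set.self_mem_Ici ht ht
  have hVle : V t ≤ V t0 * Real.exp (-q * (t - t0)) ^ 2 := by
    have hWt0 : W t0 = V t0 := by simp [hWdef]
    rw [hWt0] at hW
    have hexp : Real.exp (-q * (t - t0)) ^ 2 = Real.exp (-(2 * q * (t - t0))) := by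
      rw [← Real.exp_nat_mul]
      ring_nf
    rw [hexp, Real.exp_neg, ← div_eq_mul_inv, le_div_iff₀ (Real.exp_pos _)]
    exact hW
  have hV0 : (0:ℝ) ≤ V t0 := by positivity
  calc Real.sqrt (V t) ≤ Real.sqrt (V t0 * Real.exp (-q * (t - t0)) ^ 2) :=
        Real.sqrt_le_sqrt hVle
    _ = Real.sqrt (V t0) * Real.exp (-q * (t - t0)) := by
        rw [Real.sqrt_mul hV0, Real.sqrt_sq (Real.exp_pos _).le]
end

section
/- Let $u > 0$, $u_d > 0$, and $w, \theta, \theta_p \in \mathbb{R}$. Define $U = \sqrt{u^2+w^2}$, $U_d = \sqrt{u_d^2+w^2}$, $\gamma = \theta - \arctan(w/u)$, $\alpha_d = \arctan(w/u_d)$, and $\tilde{u} = u - u_d$. Then $U \sin(\gamma - \theta_p) = U_d \sin(\theta - \alpha_d - \theta_p) + \tilde{u}\,\sin(\theta - \theta_p)$. -/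
open Real

lemma key (u w a : ℝ) (hu : 0 < u) :
    Real.sqrt (u ^ 2 + w ^ 2) * Real.sin (a - Real.arctan (w / u)) =
      u * Real.sin a - w * Real.cos a := by
  have hsq : Real.sqrt (u ^ 2 + w ^ 2) = u * Real.sqrt (1 + (w / u) ^ 2) := by
    rw [← Real.sqrt_sq hu.le, ← Real.sqrt_mul (sq_nonneg u)]
    congr 1
    field_simp
    rw [Real.sq_sqrt (sq_nonneg u)]
  rw [Real.sin_sub, Real.sin_arctan, Real.cos_arctan, hsq]
  have h1 : Real.sqrt (1 + (w / u) ^ 2) > 0 := Real.sqrt_pos.2 (by positivity)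
  field_simp

/-- Splitting of the flight-path term into the desired-surge term and a perturbation
proportional to the surge tracking error:
`U sin(γ - θp) = U_d sin(θ - α_d - θp) + ũ sin(θ - θp)`. -/
theorem flight_path_split (u ud w θ θp : ℝ) (hu : 0 < u) (hud : 0 < ud) :
    Real.sqrt (u ^ 2 + w ^ 2) *
        Real.sin ((θ - Real.arctan (w / u)) - θp) =
      Real.sqrt (ud ^ 2 + w ^ 2) *
        Real.sin (θ - Real.arctan (w / ud) - θp) +
      (u - ud) * Real.sin (θ - θp) := by
  have h1 : (θ - Real.arctan (w / u)) - θp = (θ - θp) - Real.arctan (w / u) := by ring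
  have h2 : θ - Real.arctan (w / ud) - θp = (θ - θp) - Real.arctan (w / ud) := by ring
  rw [h1, h2, key u w (θ - θp) hu, key ud w (θ - θp) hud]
  ring
end

section
/- Let $k_u > 0$, $k_c > 0$, $c_u > 0$, let $\boldsymbol{\phi} : \mathbb{R} \to \mathbb{R}^3$ be continuous, and let $\tilde{u} : \mathbb{R} \to \mathbb{R}$ and $\tilde{\mathbf{V}} : \mathbb{R} \to \mathbb{R}^3$ be differentiable, satisfying the closed-loop surge error dynamics $\dot{\tilde{u}}(t) = -k_u\tilde{u}(t) - k_c\,\mathrm{sign}(\tilde{u}(t)) - \langle\boldsymbol{\phi}(t), \tilde{\mathbf{V}}(t)\rangle$ and $\dot{\tilde{\mathbf{V}}}(t) = c_u\,\boldsymbol{\phi}(t)\,\tilde{u}(t)$ (where $\mathrm{sign}(0)=0$). Then $W(t) = \tfrac{1}{2}\tilde{u}(t)^2 + \tfrac{1}{2c_u}\|\tilde{\mathbf{V}}(t)\|^2$ satisfies $\dot{W}(t) = -k_u\tilde{u}(t)^2 - k_c|\tilde{u}(t)| \le 0$; in particular $W$ is nonincreasing and $\|\tilde{\mathbf{V}}(t)\|^2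 \le 2c_u W(t_0)$ for all $t \ge t_0$. -/
open Real

/-- Lyapunov analysis of the closed-loop surge error dynamics with the adaptive
ocean-current observer: `W = ½ũ² + (1/(2c_u))‖Ṽ‖²` has derivative
`-k_u ũ² - k_c |ũ| ≤ 0`, so `W` is nonincreasing and `‖Ṽ(t)‖² ≤ 2 c_u W(t0)`. -/
theorem surge_observer_lyapunov
    (ku kc cu : ℝ) (hku : 0 < ku) (hkc : 0 < kc) (hcu : 0 < cu)
    (φ : ℝ → EuclideanSpace ℝ (Fin 3)) (hφ : Continuous φ)
    (ut : ℝ → ℝ) (Vt : ℝ → EuclideanSpace ℝ (Fin 3))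
    (hu : ∀ t, HasDerivAt ut
      (-ku * ut t - kc * Real.sign (ut t) - (inner ℝ (φ t) (Vt t) : ℝ)) t)
    (hV : ∀ t, HasDerivAt Vt ((cu * ut t) • φ t) t) :
    (∀ t, HasDerivAt (fun s => (1 / 2) * (ut s) ^ 2 + (1 / (2 * cu)) * ‖Vt s‖ ^ 2)
        (-ku * (ut t) ^ 2 - kc * |ut t|) t
      ∧ -ku * (ut t) ^ 2 - kc * |ut t| ≤ 0)
    ∧ Antitone (fun s => (1 / 2) * (ut s) ^ 2 + (1 / (2 * cu)) * ‖Vt s‖ ^ 2)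
    ∧ ∀ t0 t, t0 ≤ t →
        ‖Vt t‖ ^ 2 ≤ 2 * cu * ((1 / 2) * (ut t0) ^ 2 + (1 / (2 * cu)) * ‖Vt t0‖ ^ 2) := by
  have hW : ∀ t, HasDerivAt (fun s => (1 / 2) * (ut s) ^ 2 + (1 / (2 * cu)) * ‖Vt s‖ ^ 2)
      (-ku * (ut t) ^ 2 - kc * |ut t|) t := by
    intro t
    have h1 : HasDerivAt (fun s => (1 / 2) * (ut s) ^ 2)
        ((1 / 2) * (2 * ut t * (-ku * ut t - kc * Real.sign (ut t)
          - (inner ℝ (φ t) (Vt t) : ℝ)))) t :=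
      (((hu t).pow 2).const_mul _).congr_deriv (by ring)
    have h2 : HasDerivAt (fun s => (inner ℝ (Vt s) (Vt s) : ℝ))
        ((inner ℝ (Vt t) ((cu * ut t) • φ t) : ℝ) + (inner ℝ ((cu * ut t) • φ t) (Vt t) : ℝ)) t :=
      (hV t).inner ℝ (hV t)
    have h2' : HasDerivAt (fun s => (1 / (2 * cu)) * ‖Vt s‖ ^ 2)
        ((1 / (2 * cu)) * ((inner ℝ (Vt t) ((cu * ut t) • φ t) : ℝ)
          + (inner ℝ ((cu * ut t) • φ t) (Vt t) : ℝ))) t := by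
      have := h2.const_mul (1 / (2 * cu))
      simpa only [real_inner_self_eq_norm_sq] using this
    have := h1.add h2'
    have key : (1 / 2) * (2 * ut t * (-ku * ut t - kc * Real.sign (ut t)
          - (inner ℝ (φ t) (Vt t) : ℝ)))
        + (1 / (2 * cu)) * ((inner ℝ (Vt t) ((cu * ut t) • φ t) : ℝ)
          + (inner ℝ ((cu * ut t) • φ t) (Vt t) : ℝ))
        = -ku * (ut t) ^ 2 - kc * |ut t| := by
      rw [real_inner_smul_left, real_inner_smul_right, real_inner_comm (Vt t) (φ t)]
      have hsign : ut t * Real.sign (ut t) = |ut t| := by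
        rcases lt_trichotomy (ut t) 0 with h | h | h
        · rw [Real.sign_of_neg h, abs_of_neg h]; ring
        · simp [h]
        · rw [Real.sign_of_pos h, abs_of_pos h]; ring
      have harith : ∀ c u p : ℝ, c ≠ 0 → 1 / (2 * c) * (c * u * p + c * u * p) = u * p := by
        intro c u p hc; field_simp; ring
      rw [harith cu (ut t) _ (ne_of_gt hcu)]
      linear_combination -hsign * kc
    exact this.congr_deriv key
  have hW' : ∀ t, -ku * (ut t) ^ 2 - kc * |ut t| ≤ 0 := by
    intro t
    have := sq_nonneg (ut t)
    have := abs_nonneg (ut t)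
    nlinarith
  have hAnti : Antitone (fun s => (1 / 2) * (ut s) ^ 2 + (1 / (2 * cu)) * ‖Vt s‖ ^ 2) := by
    apply antitone_of_deriv_nonpos
    · exact fun t => (hW t).differentiableAt
    · intro t
      rw [(hW t).deriv]
      exact hW' t
  refine ⟨fun t => ⟨hW t, hW' t⟩, hAnti, fun t0 t ht => ?_⟩
  have h := hAnti ht
  have h1 : ‖Vt t‖ ^ 2 ≤ 2 * cu * ((1 / 2) * (ut t) ^ 2 + (1 / (2 * cu)) * ‖Vt t‖ ^ 2) := by
    have h2 : 2 * cu * ((1 / 2) * (ut t) ^ 2 + (1 / (2 * cu)) * ‖Vt t‖ ^ 2)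
        = cu * (ut t) ^ 2 + ‖Vt t‖ ^ 2 := by field_simp
    nlinarith [sq_nonneg (ut t)]
  calc ‖Vt t‖ ^ 2 ≤ 2 * cu * ((1 / 2) * (ut t) ^ 2 + (1 / (2 * cu)) * ‖Vt t‖ ^ 2) := h1
    _ ≤ 2 * cu * ((1 / 2) * (ut t0) ^ 2 + (1 / (2 * cu)) * ‖Vt t0‖ ^ 2) := by
        apply mul_le_mul_of_nonneg_left h (by linarith)
end

section
/- Let $k_\theta, k_q, k_d, c_q, \lambda_q > 0$, let $\boldsymbol{\phi} : \mathbb{R} \to \mathbb{R}^9$ be continuous, and let $s, \tilde{\theta} : \mathbb{R} \to \mathbb{R}$ and $\tilde{\boldsymbol{\vartheta}} : \mathbb{R} \to \mathbb{R}^9$ be differentiable, satisfying the closed-loop pitch error dynamics $\dot{s} = -k_\theta\tilde{\theta} - k_q s - k_d\,\mathrm{sign}(s) - \langle\boldsymbol{\phi}, \tilde{\boldsymbol{\vartheta}}\rangle$, $\dot{\tilde{\theta}} = s - \lambda_q\tilde{\theta}$, and $\dot{\tilde{\boldsymbol{\vartheta}}} = c_q\,\boldsymbol{\phi}\,s$ (where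 $\mathrm{sign}(0)=0$). Then $W(t) = \tfrac{1}{2}s(t)^2 + \tfrac{k_\theta}{2}\tilde{\theta}(t)^2 + \tfrac{1}{2c_q}\|\tilde{\boldsymbol{\vartheta}}(t)\|^2$ satisfies $\dot{W}(t) = -k_q s(t)^2 - k_d|s(t)| - k_\theta\lambda_q\tilde{\theta}(t)^2 \le 0$; in particular $W$ is nonincreasing and $\tilde{\boldsymbol{\vartheta}}$ is bounded. -/
open Real

lemma mul_sign_eq_abs (x : ℝ) : x * Real.sign x = |x| := by
  rcases lt_trichotomy x 0 with h | h | h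
  · rw [Real.sign_of_neg h, abs_of_neg h]; ring
  · simp [h]
  · rw [Real.sign_of_pos h, abs_of_pos h]; ring

/-- Lyapunov analysis of the closed-loop pitch error dynamics with the adaptive
observer: `W = ½s² + (k_θ/2)θ̃² + (1/(2c_q))‖ϑ̃‖²` has derivative
`-k_q s² - k_d|s| - k_θ lamq θ̃² ≤ 0`, so `W` is nonincreasing and `ϑ̃` is bounded. -/
theorem pitch_observer_lyapunov
    (kθ kq kd cq lamq : ℝ)
    (hkθ : 0 < kθ) (hkq : 0 < kq) (hkd : 0 < kd) (hcq : 0 < cq) (hlamq : 0 < lamq)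
    (φ : ℝ → EuclideanSpace ℝ (Fin 9)) (hφ : Continuous φ)
    (s θt : ℝ → ℝ) (ϑ : ℝ → EuclideanSpace ℝ (Fin 9))
    (hs : ∀ t, HasDerivAt s
      (-kθ * θt t - kq * s t - kd * Real.sign (s t) - (inner ℝ (φ t) (ϑ t) : ℝ)) t)
    (hθ : ∀ t, HasDerivAt θt (s t - lamq * θt t) t)
    (hϑ : ∀ t, HasDerivAt ϑ ((cq * s t) • φ t) t) :
    (∀ t, HasDerivAt
        (fun τ => (1 / 2) * (s τ) ^ 2 + (kθ / 2) * (θt τ) ^ 2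
          + (1 / (2 * cq)) * ‖ϑ τ‖ ^ 2)
        (-kq * (s t) ^ 2 - kd * |s t| - kθ * lamq * (θt t) ^ 2) t
      ∧ -kq * (s t) ^ 2 - kd * |s t| - kθ * lamq * (θt t) ^ 2 ≤ 0)
    ∧ Antitone (fun τ => (1 / 2) * (s τ) ^ 2 + (kθ / 2) * (θt τ) ^ 2
        + (1 / (2 * cq)) * ‖ϑ τ‖ ^ 2)
    ∧ ∀ t0 t, t0 ≤ t →
        ‖ϑ t‖ ^ 2 ≤ 2 * cq * ((1 / 2) * (s t0) ^ 2 + (kθ / 2) * (θt t0) ^ 2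
          + (1 / (2 * cq)) * ‖ϑ t0‖ ^ 2) := by
  have hW : ∀ t, HasDerivAt
      (fun τ => (1 / 2) * (s τ) ^ 2 + (kθ / 2) * (θt τ) ^ 2
        + (1 / (2 * cq)) * ‖ϑ τ‖ ^ 2)
      (-kq * (s t) ^ 2 - kd * |s t| - kθ * lamq * (θt t) ^ 2) t := by
    intro t
    have h1 : HasDerivAt (fun τ => (1 / 2) * (s τ) ^ 2)
        ((1 / 2) * (2 * s t * (-kθ * θt t - kq * s t - kd * Real.sign (s t)
          - (inner ℝ (φ t) (ϑ t) : ℝ)))) t := by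
      refine (((hs t).pow 2).const_mul (1 / 2)).congr_deriv (Eq.symm ?_)
      push_cast
      ring
    have h2 : HasDerivAt (fun τ => (kθ / 2) * (θt τ) ^ 2)
        ((kθ / 2) * (2 * θt t * (s t - lamq * θt t))) t := by
      refine (((hθ t).pow 2).const_mul (kθ / 2)).congr_deriv (Eq.symm ?_)
      push_cast
      ring
    have hinner : HasDerivAt (fun τ => (inner ℝ (ϑ τ) (ϑ τ) : ℝ))
        ((inner ℝ (ϑ t) ((cq * s t) • φ t) : ℝ) + (inner ℝ ((cq * s t) • φ t) (ϑ t) : ℝ)) t :=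
      (hϑ t).inner ℝ (hϑ t)
    have h3 : HasDerivAt (fun τ => (1 / (2 * cq)) * ‖ϑ τ‖ ^ 2)
        ((1 / (2 * cq)) * ((inner ℝ (ϑ t) ((cq * s t) • φ t) : ℝ)
          + (inner ℝ ((cq * s t) • φ t) (ϑ t) : ℝ))) t := by
      have := hinner.const_mul (1 / (2 * cq))
      simpa only [real_inner_self_eq_norm_sq] using this
    have hsum := (h1.add h2).add h3
    refine hsum.congr_deriv (Eq.symm ?_)
    have e1 : (inner ℝ ((cq * s t) • φ t) (ϑ t) : ℝ) = (cq * s t) * (inner ℝ (φ t) (ϑ t) : ℝ) := by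
      rw [real_inner_smul_left]
    have e2 : (inner ℝ (ϑ t) ((cq * s t) • φ t) : ℝ) = (cq * s t) * (inner ℝ (φ t) (ϑ t) : ℝ) := by
      rw [real_inner_smul_right, real_inner_comm]
    have habs : s t * Real.sign (s t) = |s t| := mul_sign_eq_abs _
    have hcq' : cq ≠ 0 := ne_of_gt hcq
    rw [e1, e2, ← habs]
    generalize (inner ℝ (φ t) (ϑ t) : ℝ) = I
    field_simp
    ring
  have hW0 : ∀ t, -kq * (s t) ^ 2 - kd * |s t| - kθ * lamq * (θt t) ^ 2 ≤ 0 := by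
    intro t
    nlinarith [mul_nonneg hkq.le (sq_nonneg (s t)), mul_nonneg hkd.le (abs_nonneg (s t)),
      mul_nonneg (mul_nonneg hkθ.le hlamq.le) (sq_nonneg (θt t))]
  have hanti : Antitone (fun τ => (1 / 2) * (s τ) ^ 2 + (kθ / 2) * (θt τ) ^ 2
      + (1 / (2 * cq)) * ‖ϑ τ‖ ^ 2) := by
    apply antitone_of_deriv_nonpos
    · exact fun t => (hW t).differentiableAt
    · intro t
      rw [(hW t).deriv]
      exact hW0 t
  refine ⟨fun t => ⟨hW t, hW0 t⟩, hanti, ?_⟩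
  intro t0 t ht
  have h := hanti ht
  have hle : (1 / (2 * cq)) * ‖ϑ t‖ ^ 2 ≤ (1 / 2) * (s t0) ^ 2 + (kθ / 2) * (θt t0) ^ 2
      + (1 / (2 * cq)) * ‖ϑ t0‖ ^ 2 := by
    have hnn : 0 ≤ (1 / 2) * (s t) ^ 2 + (kθ / 2) * (θt t) ^ 2 := by positivity
    simp only at h
    linarith
  have hcq2 : 0 < 2 * cq := by linarith
  calc ‖ϑ t‖ ^ 2 = (2 * cq) * ((1 / (2 * cq)) * ‖ϑ t‖ ^ 2) := by
        field_simp
    _ ≤ 2 * cq * ((1 / 2) * (s t0) ^ 2 + (kθ / 2) * (θt t0) ^ 2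
          + (1 / (2 * cq)) * ‖ϑ t0‖ ^ 2) := by
        exact mul_le_mul_of_nonneg_left hle (le_of_lt hcq2)
end
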